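/- Let φ = μφ₀ ∘ L where L is a linear operator on a Hilbert space H and φ₀ is closed proper convex, and let α > 0, Y ∈ H. If P* is a minimizer of P ↦ (μφ₀)*(-P) + ⟨(α/2)L(Lᵀ(P)) + L(Y), P⟩, then prox_{αφ}(Y) = Y + α Lᵀ(P*). -/

import Mathlib

noncomputable section
open scoped RealInnerProductSpace
set_option linter.unusedSectionVars false

variable {H : Type*} [NormedAddCommGroup H] [InnerProductSpace ℝ H] [FiniteDimensional ℝ H]

/-- Convexity for extended-real-valued functions. -/
def ConvexE (g : H → EReal) : Prop :=
  ∀ x y : H, ∀ a b : ℝ, 0 ≤ a → 0 ≤ b → a + b = 1 →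
    g (a • x + b • y) ≤ (a : EReal) * g x + (b : EReal) * g y

/-- Properness: somewhere finite, nowhere `-∞`. -/
def ProperE (g : H → EReal) : Prop := (∃ x, g x ≠ ⊤) ∧ ∀ x, g x ≠ ⊥

/-- Fenchel (convex) conjugate: `g*(x) = sup_y (⟨y, x⟩ - g y)`. -/
def conjE (g : H → EReal) (x : H) : EReal := ⨆ y : H, ((⟪y, x⟫ : ℝ) : EReal) - g y

/-- epigraph in H × ℝ -/
def epiE (g : H → EReal) : Set (H × ℝ) := {q | g q.1 ≤ (q.2 : EReal)}

lemma fyE (g : H → EReal) (x p : H) : ((⟪x, p⟫ : ℝ) : EReal) - g x ≤ conjE g p :=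
  le_iSup (fun y : H => ((⟪y, p⟫ : ℝ) : EReal) - g y) x

lemma conjE_ne_bot (g : H → EReal) (hg : ProperE g) (p : H) : conjE g p ≠ ⊥ := by
  obtain ⟨⟨x, hx⟩, hb⟩ := hg
  obtain ⟨r, hr⟩ : ∃ r : ℝ, g x = (r : EReal) := by
    cases hgx : g x with
    | bot => exact absurd hgx (hb x)
    | coe r => exact ⟨r, rfl⟩
    | top => exact absurd hgx hx
  have h := fyE g x p
  rw [hr] at h
  intro hc
  rw [hc, le_bot_iff] at h
  have : ((⟪x, p⟫ - r : ℝ) : EReal) = ⊥ := by rw [← h]; norm_cast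
  exact EReal.coe_ne_bot _ this

lemma conjE_le_of_minorant {g : H → EReal} {p : H} {c : ℝ}
    (h : ∀ y, ((⟪y, p⟫ + c : ℝ) : EReal) ≤ g y) : conjE g p ≤ ((-c : ℝ) : EReal) := by
  refine iSup_le fun y => ?_
  calc ((⟪y, p⟫ : ℝ) : EReal) - g y ≤ ((⟪y, p⟫ : ℝ) : EReal) - ((⟪y, p⟫ + c : ℝ) : EReal) :=
        EReal.sub_le_sub le_rfl (h y)
    _ = ((-c : ℝ) : EReal) := by norm_cast; ring

/-- decomposition of a continuous linear functional on H × ℝ -/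
lemma decomp (f : (H × ℝ) →L[ℝ] ℝ) : ∃ (p : H) (s : ℝ),
    ∀ x : H, ∀ t : ℝ, f (x, t) = ⟪x, p⟫ + t * s := by
  set fH : H →L[ℝ] ℝ := f.comp (ContinuousLinearMap.inl ℝ H ℝ)
  refine ⟨(InnerProductSpace.toDual ℝ H).symm fH, f (0, 1), fun x t => ?_⟩
  have h1 : ⟪x, (InnerProductSpace.toDual ℝ H).symm fH⟫ = fH x := by
    rw [real_inner_comm]; exact InnerProductSpace.toDual_symm_apply
  have h2 : (x, t) = (x, (0 : ℝ)) + t • ((0 : H), (1 : ℝ)) := by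
    simp [Prod.ext_iff]
  rw [h2, map_add, map_smul]
  simp only [smul_eq_mul]
  rw [h1]
  rfl

lemma exists_minorantE (g : H → EReal) (hproper : ProperE g)
    (hcvx : Convex ℝ (epiE g)) (hcl : IsClosed (epiE g)) :
    ∃ (p : H) (c : ℝ), ∀ y, ((⟪y, p⟫ + c : ℝ) : EReal) ≤ g y := by
  obtain ⟨⟨x₀, hx₀⟩, hbot⟩ := hproper
  obtain ⟨r₀, hr₀⟩ : ∃ r : ℝ, g x₀ = (r : EReal) := by
    cases h : g x₀ with
    | bot => exact absurd h (hbot x₀)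
    | coe r => exact ⟨r, rfl⟩
    | top => exact absurd h hx₀
  have hnot : (x₀, r₀ - 1) ∉ epiE g := by
    simp only [epiE, Set.mem_setOf_eq, hr₀, EReal.coe_le_coe_iff]
    linarith
  obtain ⟨f, u, hfu, hmem⟩ := geometric_hahn_banach_point_closed hcvx hcl hnot
  obtain ⟨p, s, hf⟩ := decomp f
  rw [hf] at hfu
  have hmem' : ∀ y : H, ∀ t : ℝ, g y ≤ (t : EReal) → u < ⟪y, p⟫ + t * s := by
    intro y t ht
    have := hmem (y, t) ht
    rwa [hf] at this
  -- s > 0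
  have hs : 0 < s := by
    rcases lt_trichotomy s 0 with h | h | h
    · -- s < 0 : contradiction by taking t large
      exfalso
      set t := max r₀ ((u - ⟪x₀, p⟫) / s)
      have ht : g x₀ ≤ (t : EReal) := by
        rw [hr₀]; exact_mod_cast le_max_left _ _
      have h2 := hmem' x₀ t ht
      have h3 : (u - ⟪x₀, p⟫) / s ≤ t := le_max_right _ _
      have h4 : t * s ≤ u - ⟪x₀, p⟫ := by
        have := mul_le_mul_of_nonpos_right h3 h.le
        rwa [div_mul_cancel₀ _ h.ne] at this
      linarith
    · -- s = 0 : contradiction with (x₀, r₀)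
      exfalso
      have h2 := hmem' x₀ r₀ (le_of_eq hr₀)
      rw [h] at h2 hfu
      simp at h2 hfu
      linarith
    · exact h
  refine ⟨(-(1/s)) • p, u / s, fun y => ?_⟩
  cases hgy : g y with
  | bot => exact absurd hgy (hbot y)
  | top => exact le_top
  | coe r =>
    have h2 := hmem' y r (le_of_eq hgy)
    rw [EReal.coe_le_coe_iff]
    rw [inner_smul_right]
    have key : (u - ⟪y, p⟫) / s ≤ r := by rw [div_le_iff₀ hs]; nlinarith
    have e : -(1/s) * ⟪y, p⟫ + u/s = (u - ⟪y, p⟫)/s := by ring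
    rw [e]; exact key

lemma real_of_ereal {X : EReal} (h1 : X ≠ ⊥) (h2 : X ≠ ⊤) : ∃ r : ℝ, X = (r : EReal) := by
  cases h : X with
  | bot => exact absurd h h1
  | coe r => exact ⟨r, rfl⟩
  | top => exact absurd h h2

lemma biconjE_ge (g : H → EReal) (hproper : ProperE g)
    (hcvx : Convex ℝ (epiE g)) (hcl : IsClosed (epiE g)) (x₀ : H) :
    g x₀ ≤ conjE (conjE g) x₀ := by
  obtain ⟨p₀, c₀, hmin⟩ := exists_minorantE g hproper hcvx hcl
  have hbot := hproper.2
  by_contra hcon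
  push_neg at hcon
  -- g** x₀ is a real number d
  have hne_bot : conjE (conjE g) x₀ ≠ ⊥ := by
    have h1 : conjE g p₀ ≤ ((-c₀ : ℝ) : EReal) := conjE_le_of_minorant hmin
    have h2 := fyE (conjE g) p₀ x₀
    intro hb
    rw [hb, le_bot_iff] at h2
    have h3 : ((⟪p₀, x₀⟫ : ℝ) : EReal) - ((-c₀ : ℝ) : EReal) ≤
        ((⟪p₀, x₀⟫ : ℝ) : EReal) - conjE g p₀ := EReal.sub_le_sub le_rfl h1
    rw [h2, le_bot_iff] at h3
    have : ((⟪p₀, x₀⟫ - (-c₀) : ℝ) : EReal) = ⊥ := by rw [← h3]; norm_cast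
    exact EReal.coe_ne_bot _ this
  obtain ⟨d, hd⟩ : ∃ d : ℝ, conjE (conjE g) x₀ = (d : EReal) := by
    refine real_of_ereal hne_bot (fun ht => ?_)
    rw [ht] at hcon; exact (not_top_lt hcon)
  rw [hd] at hcon
  obtain ⟨c, hc1, hc2⟩ := EReal.exists_between_coe_real hcon
  -- (x₀, c) ∉ epi g
  have hnot : (x₀, c) ∉ epiE g := by
    simp only [epiE, Set.mem_setOf_eq]
    exact fun h => absurd (h.trans_lt hc2) (lt_irrefl _)
  obtain ⟨f, u, hfu, hmem⟩ := geometric_hahn_banach_point_closed hcvx hcl hnot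
  obtain ⟨p, s, hf⟩ := decomp f
  rw [hf] at hfu
  have hmem' : ∀ y : H, ∀ t : ℝ, g y ≤ (t : EReal) → u < ⟪y, p⟫ + t * s := by
    intro y t ht
    have := hmem (y, t) ht
    rwa [hf] at this
  -- biconjugate lower bound from a conjugate upper bound
  have hlb : ∀ (q : H) (e : ℝ), conjE g q ≤ (e : EReal) → ((⟪x₀, q⟫ - e : ℝ) : EReal) ≤ (d : EReal) := by
    intro q e hq
    have h2 := fyE (conjE g) q x₀
    rw [hd] at h2
    calc ((⟪x₀, q⟫ - e : ℝ) : EReal) = ((⟪q, x₀⟫ : ℝ) : EReal) - ((e : ℝ) : EReal) := by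
          rw [real_inner_comm]; norm_cast
      _ ≤ ((⟪q, x₀⟫ : ℝ) : EReal) - conjE g q := EReal.sub_le_sub le_rfl hq
      _ ≤ (d : EReal) := h2
  -- s ≥ 0
  obtain ⟨⟨xw, hxw⟩, -⟩ := hproper
  obtain ⟨rw', hrw⟩ : ∃ r : ℝ, g xw = (r : EReal) := real_of_ereal (hbot xw) hxw
  have hs : 0 ≤ s := by
    by_contra hneg
    push_neg at hneg
    set t := max rw' ((u - ⟪xw, p⟫) / s)
    have ht : g xw ≤ (t : EReal) := by rw [hrw]; exact_mod_cast le_max_left _ _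
    have h2 := hmem' xw t ht
    have h3 : (u - ⟪xw, p⟫) / s ≤ t := le_max_right _ _
    have h4 : t * s ≤ u - ⟪xw, p⟫ := by
      have := mul_le_mul_of_nonpos_right h3 hneg.le
      rwa [div_mul_cancel₀ _ hneg.ne] at this
    linarith
  rcases eq_or_lt_of_le hs with hs0 | hspos
  · -- s = 0 case
    rw [← hs0] at hfu hmem'
    simp only [mul_zero, add_zero] at hfu hmem'
    set ε := u - ⟪x₀, p⟫ with hε
    have hεpos : 0 < ε := by simp [hε]; linarith
    set M := max 1 ((c - c₀ - ⟪x₀, p₀⟫) / ε + 1) with hM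
    have hM1 : (1:ℝ) ≤ M := le_max_left _ _
    have hM2 : (c - c₀ - ⟪x₀, p₀⟫) / ε + 1 ≤ M := le_max_right _ _
    have hMbig : c - c₀ - ⟪x₀, p₀⟫ < M * ε := by
      have : (c - c₀ - ⟪x₀, p₀⟫) / ε < M := by linarith
      calc c - c₀ - ⟪x₀, p₀⟫ = ((c - c₀ - ⟪x₀, p₀⟫) / ε) * ε := by field_simp
        _ < M * ε := by exact mul_lt_mul_of_pos_right this hεpos
    -- new minorant p₀ - M p
    have hmin' : ∀ y, ((⟪y, p₀ - M • p⟫ + (c₀ + M * u) : ℝ) : EReal) ≤ g y := by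
      intro y
      cases hgy : g y with
      | bot => exact absurd hgy (hbot y)
      | top => exact le_top
      | coe r =>
        have h1 := hmin y
        rw [hgy] at h1
        rw [EReal.coe_le_coe_iff] at h1
        rw [EReal.coe_le_coe_iff]
        have h2 := hmem' y r (le_of_eq hgy)
        rw [inner_sub_right, inner_smul_right]
        nlinarith
    have h3 := hlb _ _ (conjE_le_of_minorant hmin')
    rw [EReal.coe_le_coe_iff] at h3
    rw [inner_sub_right, inner_smul_right] at h3
    -- h3 : ⟪x₀,p₀⟫ - M⟪x₀,p⟫ - (-(c₀ + M u)) ≤ d, i.e. ⟪x₀,p₀⟫ + c₀ + M ε ≤ d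
    have : (c : EReal) < (c : EReal) := by
      calc (c : EReal) < conjE (conjE g) x₀ := by
            rw [hd]; exact_mod_cast lt_of_lt_of_le (by nlinarith : c < ⟪x₀, p₀⟫ - M * ⟪x₀, p⟫ - (-(c₀ + M * u))) h3
        _ = (d : EReal) := hd
        _ < (c : EReal) := by exact_mod_cast hc1
    exact absurd this (lt_irrefl _)
  · -- s > 0 case
    have hmin' : ∀ y, ((⟪y, (-(1/s)) • p⟫ + u / s : ℝ) : EReal) ≤ g y := by
      intro y
      cases hgy : g y with
      | bot => exact absurd hgy (hbot y)
      | top => exact le_top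
      | coe r =>
        have h2 := hmem' y r (le_of_eq hgy)
        rw [EReal.coe_le_coe_iff, inner_smul_right]
        have key : (u - ⟪y, p⟫) / s ≤ r := by rw [div_le_iff₀ hspos]; nlinarith
        have e : -(1/s) * ⟪y, p⟫ + u/s = (u - ⟪y, p⟫)/s := by ring
        rw [e]; exact key
    have h3 := hlb _ _ (conjE_le_of_minorant hmin')
    rw [EReal.coe_le_coe_iff, inner_smul_right] at h3
    -- hfu : ⟪x₀,p⟫ + c s < u
    have hclt : c < -(1/s) * ⟪x₀, p⟫ - (-(u/s)) := by
      rw [lt_sub_iff_add_lt]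
      have : c * s < u - ⟪x₀, p⟫ := by linarith
      have h5 : c < (u - ⟪x₀, p⟫) / s := (lt_div_iff₀ hspos).mpr this
      have e : -(1/s) * ⟪x₀, p⟫ + u/s = (u - ⟪x₀, p⟫)/s := by ring
      nlinarith [h5]
    have hcd : (c : ℝ) < d := lt_of_lt_of_le hclt h3
    have hdc : (d : ℝ) < c := by exact_mod_cast hc1
    linarith

theorem main_general (L : H →L[ℝ] H) (g : H → EReal) (hproper : ProperE g)
    (hcvx : Convex ℝ (epiE g)) (hcl : IsClosed (epiE g))
    (α : ℝ) (hα : 0 < α) (Y Pstar : H)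
    (hP : ∀ P : H,
      conjE g (-Pstar) +
          ((⟪(α / 2) • L (ContinuousLinearMap.adjoint L Pstar) + L Y, Pstar⟫ : ℝ) : EReal) ≤
        conjE g (-P) +
          ((⟪(α / 2) • L (ContinuousLinearMap.adjoint L P) + L Y, P⟫ : ℝ) : EReal)) :
    ∀ U : H,
      g (L (Y + α • ContinuousLinearMap.adjoint L Pstar)) +
          (((1 / (2 * α)) * ‖(Y + α • ContinuousLinearMap.adjoint L Pstar) - Y‖ ^ 2 : ℝ) :
            EReal) ≤
        g (L U) + (((1 / (2 * α)) * ‖U - Y‖ ^ 2 : ℝ) : EReal) := by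
  have hbot := hproper.2
  set T := ContinuousLinearMap.adjoint L with hT
  have hd1 : ∀ a b : H, ⟪L (T a), b⟫ = ⟪T a, T b⟫ := by
    intro a b; rw [hT, ContinuousLinearMap.adjoint_inner_right]
  have hd2 : ∀ a b : H, ⟪a, T b⟫ = ⟪L a, b⟫ := by
    intro a b; rw [hT, ContinuousLinearMap.adjoint_inner_right]
  set q : H → ℝ := fun P => ⟪(α/2) • L (T P) + L Y, P⟫ with hq
  have hP' : ∀ P : H, conjE g (-Pstar) + ((q Pstar : ℝ) : EReal) ≤
      conjE g (-P) + ((q P : ℝ) : EReal) := hP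
  clear hP
  have hqval : ∀ P, q P = (α/2)*‖T P‖^2 + ⟪L Y, P⟫ := by
    intro P
    rw [hq]
    simp only [inner_add_left, real_inner_smul_left]
    rw [hd1, real_inner_self_eq_norm_sq]
  set v : H := L Y + α • L (T Pstar) with hv
  have hqexp : ∀ (Q : H) (t : ℝ), q (Pstar + t•Q) = q Pstar + t*⟪v, Q⟫
      + t^2*((α/2)*‖T Q‖^2) := by
    intro Q t
    have e1 : T (Pstar + t•Q) = T Pstar + t • T Q := by simp [map_add, map_smul]
    have e2 : ‖T Pstar + t • T Q‖^2
        = ‖T Pstar‖^2 + 2*(t*⟪T Pstar, T Q⟫) + t^2*‖T Q‖^2 := by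
      rw [norm_add_sq_real, real_inner_smul_right, norm_smul]
      simp [mul_pow, sq_abs]
    have e3 : ⟪L Y, Pstar + t•Q⟫ = ⟪L Y, Pstar⟫ + t*⟪L Y, Q⟫ := by
      simp [inner_add_right, real_inner_smul_right]
    rw [hqval, hqval, e1, e2, e3, hv]
    rw [inner_add_left, real_inner_smul_left, hd1]
    ring
  -- finiteness of the conjugate at -Pstar
  obtain ⟨p₀, c₀, hmin⟩ := exists_minorantE g hproper hcvx hcl
  have h1 : conjE g p₀ ≤ ((-c₀ : ℝ) : EReal) := conjE_le_of_minorant hmin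
  have hKne : conjE g (-Pstar) ≠ ⊤ := by
    intro htop
    have h2 := hP' (-p₀)
    rw [htop, neg_neg, EReal.top_add_coe, top_le_iff] at h2
    have h3 : conjE g p₀ + ((q (-p₀) : ℝ) : EReal) ≤ ((-c₀ + q (-p₀) : ℝ) : EReal) := by
      rw [EReal.coe_add]; exact add_le_add h1 le_rfl
    rw [h2] at h3
    rw [top_le_iff] at h3
    exact EReal.coe_ne_top _ h3
  obtain ⟨cst, hcst⟩ := real_of_ereal (conjE_ne_bot g hproper (-Pstar)) hKne
  -- subgradient inequality
  have subgrad : ∀ x : H, ((cst + ⟪v, x + Pstar⟫ : ℝ) : EReal) ≤ conjE g x := by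
    intro x
    rcases eq_or_ne (conjE g x) ⊤ with hx | hx
    · rw [hx]; exact le_top
    obtain ⟨cx, hcx⟩ := real_of_ereal (conjE_ne_bot g hproper x) hx
    set Q : H := -x - Pstar with hQ
    have hxQ : -(Pstar + Q) = x := by rw [hQ]; abel
    have key : ∀ t : ℝ, 0 < t → t ≤ 1 → cst ≤ cx + ⟪v, Q⟫ + t*((α/2)*‖T Q‖^2) := by
      intro t ht0 ht1
      have hconv1 : conjE g (-(Pstar + t•Q)) ≤ (((1-t)*cst + t*cx : ℝ) : EReal) := by
        refine iSup_le fun y => ?_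
        cases hgy : g y with
        | bot => exact absurd hgy (hbot y)
        | top => rw [EReal.sub_top]; exact bot_le
        | coe r =>
          have ha1 : (⟪y, -Pstar⟫ - r : ℝ) ≤ cst := by
            have h5 := fyE g y (-Pstar)
            rw [hgy, hcst, ← EReal.coe_sub, EReal.coe_le_coe_iff] at h5
            exact h5
          have ha2 : (⟪y, x⟫ - r : ℝ) ≤ cx := by
            have h5 := fyE g y x
            rw [hgy, hcx, ← EReal.coe_sub, EReal.coe_le_coe_iff] at h5
            exact h5
          have hcomb : -(Pstar + t•Q) = (1-t)•(-Pstar) + t•x := by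
            rw [hQ]; module
          rw [hcomb, inner_add_right, real_inner_smul_right, real_inner_smul_right,
            ← EReal.coe_sub, EReal.coe_le_coe_iff]
          nlinarith [mul_le_mul_of_nonneg_left ha1 (by linarith : (0:ℝ) ≤ 1 - t),
            mul_le_mul_of_nonneg_left ha2 ht0.le]
      have h3 := hP' (Pstar + t•Q)
      rw [hcst] at h3
      have h4 := h3.trans (add_le_add hconv1 le_rfl)
      rw [← EReal.coe_add, ← EReal.coe_add, EReal.coe_le_coe_iff, hqexp] at h4
      have h5 : t*cst ≤ t*(cx + ⟪v, Q⟫ + t*((α/2)*‖T Q‖^2)) := by nlinarith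
      exact le_of_mul_le_mul_left h5 ht0
    have hfin : cst ≤ cx + ⟪v, Q⟫ := by
      by_contra hcon
      push_neg at hcon
      set ε := cst - (cx + ⟪v, Q⟫) with hε
      have hεpos : 0 < ε := by rw [hε]; linarith
      set K := (α/2)*‖T Q‖^2 with hK
      have hK0 : 0 ≤ K := by positivity
      set t := min 1 (ε/(K+1)) with ht
      have ht0 : 0 < t := lt_min one_pos (by positivity)
      have ht1 : t ≤ 1 := min_le_left _ _
      have h6 := key t ht0 ht1
      have h8 : t ≤ ε/(K+1) := min_le_right _ _
      have h7 : t*K < ε := by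
        calc t*K ≤ (ε/(K+1))*K := mul_le_mul_of_nonneg_right h8 hK0
          _ < ε := by
            rw [div_mul_eq_mul_div, div_lt_iff₀ (by positivity)]
            nlinarith
      rw [hε] at h7
      linarith
    rw [hcx, EReal.coe_le_coe_iff]
    have h9 : ⟪v, x + Pstar⟫ = ⟪v, x⟫ + ⟪v, Pstar⟫ := inner_add_right _ _ _
    have h10 : ⟪v, Q⟫ = -⟪v, x⟫ - ⟪v, Pstar⟫ := by
      rw [hQ, inner_sub_right, inner_neg_right]
    linarith
  -- biconjugate bound at v
  have hbiv : g v ≤ ((-cst - ⟪v, Pstar⟫ : ℝ) : EReal) := by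
    refine (biconjE_ge g hproper hcvx hcl v).trans (iSup_le fun x => ?_)
    rcases eq_or_ne (conjE g x) ⊤ with hx | hx
    · rw [hx, EReal.sub_top]; exact bot_le
    obtain ⟨cx, hcx⟩ := real_of_ereal (conjE_ne_bot g hproper x) hx
    have h1' := subgrad x
    rw [hcx, EReal.coe_le_coe_iff] at h1'
    rw [hcx, ← EReal.coe_sub, EReal.coe_le_coe_iff]
    have h2 : ⟪x, v⟫ = ⟪v, x⟫ := real_inner_comm _ _
    have h3 : ⟪v, x + Pstar⟫ = ⟪v, x⟫ + ⟪v, Pstar⟫ := inner_add_right _ _ _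
    linarith
  -- final step
  intro U
  have hvU : L (Y + α • T Pstar) = v := by rw [hv]; simp [map_add, map_smul]
  rw [hvU]
  have hnormU : ‖(Y + α • T Pstar) - Y‖^2 = α^2 * ‖T Pstar‖^2 := by
    have e : (Y + α • T Pstar) - Y = α • T Pstar := by abel
    rw [e, norm_smul]
    simp [mul_pow, sq_abs]
  cases hgU : g (L U) with
  | bot => exact absurd hgU (hbot (L U))
  | top => rw [EReal.top_add_coe]; exact le_top
  | coe rU =>
    have hFY : (⟪L U, -Pstar⟫ - rU : ℝ) ≤ cst := by
      have h5 := fyE g (L U) (-Pstar)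
      rw [hgU, hcst, ← EReal.coe_sub, EReal.coe_le_coe_iff] at h5
      exact h5
    have hadj : ⟪L U, Pstar⟫ = ⟪U, T Pstar⟫ := (hd2 U Pstar).symm
    have hvP : ⟪v, Pstar⟫ = ⟪Y, T Pstar⟫ + α*‖T Pstar‖^2 := by
      rw [hv, inner_add_left, real_inner_smul_left, hd1, real_inner_self_eq_norm_sq, hd2]
    set W := T Pstar
    have kexp : ‖(U - Y) - α•W‖^2
        = ‖U - Y‖^2 - 2*(α*(⟪U, W⟫ - ⟪Y, W⟫)) + α^2*‖W‖^2 := by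
      rw [norm_sub_sq_real, real_inner_smul_right, inner_sub_left, norm_smul]
      simp [mul_pow, sq_abs]
    have key2 : (0:ℝ) ≤ ‖(U - Y) - α•W‖^2 := by positivity
    rw [kexp] at key2
    have hreal : -cst - ⟪v, Pstar⟫ + (1/(2*α))*‖(Y + α • W) - Y‖^2
        ≤ rU + (1/(2*α))*‖U - Y‖^2 := by
      rw [hnormU, hvP]
      rw [inner_neg_right] at hFY
      rw [hadj] at hFY
      have e2 : (1/(2*α))*(α^2*‖W‖^2) = (α/2)*‖W‖^2 := by field_simp
      have e3 : (1/(2*α))*(‖U - Y‖^2 - 2*(α*(⟪U, W⟫ - ⟪Y, W⟫)) + α^2*‖W‖^2)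
          = (1/(2*α))*‖U - Y‖^2 - (⟪U, W⟫ - ⟪Y, W⟫) + (α/2)*‖W‖^2 := by
        field_simp
      have key3 : (0:ℝ) ≤ (1/(2*α))*‖U - Y‖^2 - (⟪U, W⟫ - ⟪Y, W⟫) + (α/2)*‖W‖^2 := by
        rw [← e3]; positivity
      linarith
    calc g v + (((1 / (2 * α)) * ‖(Y + α • W) - Y‖ ^ 2 : ℝ) : EReal)
        ≤ ((-cst - ⟪v, Pstar⟫ : ℝ) : EReal) + (((1 / (2 * α)) * ‖(Y + α • W) - Y‖ ^ 2 : ℝ) : EReal) :=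
          add_le_add hbiv le_rfl
      _ = ((-cst - ⟪v, Pstar⟫ + (1 / (2 * α)) * ‖(Y + α • W) - Y‖ ^ 2 : ℝ) : EReal) := by
          rw [EReal.coe_add]
      _ ≤ ((rU + (1 / (2 * α)) * ‖U - Y‖ ^ 2 : ℝ) : EReal) := by
          rw [EReal.coe_le_coe_iff]; exact hreal
      _ = (rU : EReal) + (((1 / (2 * α)) * ‖U - Y‖ ^ 2 : ℝ) : EReal) := by
          rw [EReal.coe_add]

lemma mul_le_coe_iff {μ : ℝ} (hμ : 0 < μ) (X : EReal) (hX : X ≠ ⊥) (s : ℝ) :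
    (μ : EReal) * X ≤ (s : EReal) ↔ X ≤ ((s/μ : ℝ) : EReal) := by
  cases X with
  | bot => exact absurd rfl hX
  | top =>
    rw [EReal.coe_mul_top_of_pos hμ]
    simp [top_le_iff]
  | coe r =>
    rw [← EReal.coe_mul, EReal.coe_le_coe_iff, EReal.coe_le_coe_iff, le_div_iff₀ hμ]
    constructor <;> intro h <;> nlinarith

/-- Let `φ = μφ₀ ∘ L` with `L` linear and `φ₀` closed proper convex, `α > 0`, `Y ∈ H`.
If `P*` minimizes `P ↦ (μφ₀)*(-P) + ⟨(α/2) L(Lᵀ P) + L Y, P⟩`, then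
`prox_{αφ}(Y) = Y + α Lᵀ(P*)`, i.e. `Y + α Lᵀ(P*)` minimizes
`U ↦ μφ₀(L U) + (1/(2α))‖U - Y‖²`. -/
theorem prox_via_dual (L : H →L[ℝ] H) (μ : ℝ) (hμ : 0 < μ) (φ₀ : H → EReal)
    (hconv : ConvexE φ₀) (hproper : ProperE φ₀) (hlsc : LowerSemicontinuous φ₀)
    (α : ℝ) (hα : 0 < α) (Y Pstar : H)
    (hP : ∀ P : H,
      conjE (fun z => (μ : EReal) * φ₀ z) (-Pstar) +
          ((⟪(α / 2) • L (ContinuousLinearMap.adjoint L Pstar) + L Y, Pstar⟫ : ℝ) : EReal) ≤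
        conjE (fun z => (μ : EReal) * φ₀ z) (-P) +
          ((⟪(α / 2) • L (ContinuousLinearMap.adjoint L P) + L Y, P⟫ : ℝ) : EReal)) :
    ∀ U : H,
      (μ : EReal) * φ₀ (L (Y + α • ContinuousLinearMap.adjoint L Pstar)) +
          (((1 / (2 * α)) * ‖(Y + α • ContinuousLinearMap.adjoint L Pstar) - Y‖ ^ 2 : ℝ) :
            EReal) ≤
        (μ : EReal) * φ₀ (L U) + (((1 / (2 * α)) * ‖U - Y‖ ^ 2 : ℝ) : EReal) := by
  set g : H → EReal := fun z => (μ : EReal) * φ₀ z with hg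
  have hgbot : ∀ x, g x ≠ ⊥ := by
    intro x
    rw [hg]
    cases hx : φ₀ x with
    | bot => exact absurd hx (hproper.2 x)
    | top => simp only []; rw [hx, EReal.coe_mul_top_of_pos hμ]; exact top_ne_bot
    | coe r => simp only []; rw [hx, ← EReal.coe_mul]; exact EReal.coe_ne_bot _
  have hgproper : ProperE g := by
    obtain ⟨x₀, hx₀⟩ := hproper.1
    obtain ⟨r, hr⟩ : ∃ r : ℝ, φ₀ x₀ = (r : EReal) := real_of_ereal (hproper.2 x₀) hx₀
    refine ⟨⟨x₀, ?_⟩, hgbot⟩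
    rw [hg]; simp only []; rw [hr, ← EReal.coe_mul]; exact EReal.coe_ne_top _
  have hmem : ∀ (x : H) (s : ℝ), ((x, s) ∈ epiE g ↔ φ₀ x ≤ ((s/μ : ℝ) : EReal)) :=
    fun x s => mul_le_coe_iff hμ (φ₀ x) (hproper.2 x) s
  have hcvx : Convex ℝ (epiE g) := by
    intro p hp q hq a b ha hb hab
    have hp' : φ₀ p.1 ≤ ((p.2/μ : ℝ) : EReal) := (hmem p.1 p.2).mp hp
    have hq' : φ₀ q.1 ≤ ((q.2/μ : ℝ) : EReal) := (hmem q.1 q.2).mp hq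
    refine (hmem (a • p.1 + b • q.1) (a * p.2 + b * q.2)).mpr ?_
    calc φ₀ (a • p.1 + b • q.1) ≤ (a : EReal) * φ₀ p.1 + (b : EReal) * φ₀ q.1 :=
          hconv p.1 q.1 a b ha hb hab
      _ ≤ (a : EReal) * ((p.2/μ : ℝ) : EReal) + (b : EReal) * ((q.2/μ : ℝ) : EReal) :=
          add_le_add (mul_le_mul_of_nonneg_left hp' (by exact_mod_cast ha))
            (mul_le_mul_of_nonneg_left hq' (by exact_mod_cast hb))
      _ = (((a * p.2 + b * q.2)/μ : ℝ) : EReal) := by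
          rw [← EReal.coe_mul, ← EReal.coe_mul, ← EReal.coe_add]
          norm_cast
          field_simp
  have hcl : IsClosed (epiE g) := by
    have h1 : IsClosed {p : H × EReal | φ₀ p.1 ≤ p.2} :=
      lowerSemicontinuous_iff_isClosed_epigraph.mp hlsc
    have h2 : epiE g = (fun q : H × ℝ => (q.1, ((q.2/μ : ℝ) : EReal))) ⁻¹'
        {p : H × EReal | φ₀ p.1 ≤ p.2} := by
      ext ⟨x, s⟩
      exact hmem x s
    rw [h2]
    exact h1.preimage (continuous_fst.prodMk
      (continuous_coe_real_ereal.comp (continuous_snd.div_const μ)))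
  exact main_general L g hgproper hcvx hcl α hα Y Pstar hP
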